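/- Let $0 < \sigma < 1$ and let $b = (b_m)_{m \ge 1}$ be a sequence of nonnegative reals. Then the sequence $\left(\frac{|\nu|!}{\nu!} b^\nu\right)_{\nu \in \mathcal{F}}$ belongs to $\ell^\sigma(\mathcal{F})$ if and only if $\sum_{m \ge 1} b_m < 1$ and $(b_m) \in \ell^\sigma(\mathbb{N})$. -/

import Mathlib

open Finset Filter
open scoped NNReal

namespace CDS

variable {ι : Type*}

/-- The real multinomial weight `|ν|! / ν!`. -/
noncomputable def W (ν : ι →₀ ℕ) : ℝ :=
  ((ν.sum fun _ n => n).factorial : ℝ) / (ν.prod fun _ n => (n.factorial : ℝ))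

/-- The generic term of the CDS series. -/
noncomputable def term (b : ι → ℝ) (ν : ι →₀ ℕ) : ℝ :=
  W ν * ν.prod fun j n => b j ^ n

lemma W_eq {s : Finset ι} {ν : ι →₀ ℕ} (h : ν.support ⊆ s) :
    W ν = (Nat.multinomial s ⇑ν : ℝ) := by
  classical
  have hsum : (ν.sum fun _ n => n) = ∑ i ∈ s, ν i :=
    Finsupp.sum_of_support_subset ν h _ (fun _ _ => rfl)
  have hprod : (ν.prod fun _ n => (n.factorial : ℝ)) = ((∏ i ∈ s, (ν i).factorial : ℕ) : ℝ) := by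
    rw [Finsupp.prod_of_support_subset ν h (fun _ n => (n.factorial : ℝ)) (fun _ _ => by simp)]
    push_cast; rfl
  have hspec := Nat.multinomial_spec s ⇑ν
  have hne : ((∏ i ∈ s, (ν i).factorial : ℕ) : ℝ) ≠ 0 := by
    positivity
  rw [W, hsum, hprod, div_eq_iff hne, ← Nat.cast_mul, mul_comm, hspec]

lemma one_le_W (ν : ι →₀ ℕ) : 1 ≤ W ν := by
  rw [W_eq (subset_refl ν.support)]
  exact_mod_cast Nat.one_le_iff_ne_zero.2 (Nat.multinomial_pos ν.support ⇑ν).ne'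

lemma W_nonneg (ν : ι →₀ ℕ) : 0 ≤ W ν := zero_le_one.trans (one_le_W ν)

lemma term_nonneg {b : ι → ℝ} (hb : ∀ i, 0 ≤ b i) (ν : ι →₀ ℕ) : 0 ≤ term b ν :=
  mul_nonneg (W_nonneg ν) (Finset.prod_nonneg fun i _ => pow_nonneg (hb i) _)

lemma term_eq_over [DecidableEq ι] {s : Finset ι} {b : ι → ℝ} {ν : ι →₀ ℕ}
    (h : ν.support ⊆ s) :
    term b ν = (Nat.multinomial s ⇑ν : ℝ) * ∏ i ∈ s, b i ^ ν i := by
  rw [term, W_eq h, Finsupp.prod_of_support_subset ν h (fun j n => b j ^ n) (fun _ _ => by simp)]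

/-- The multinomial theorem, summed over `finsuppAntidiag`. -/
lemma sum_term [DecidableEq ι] (b : ι → ℝ) (s : Finset ι) (n : ℕ) :
    ∑ ν ∈ Finset.finsuppAntidiag s n, term b ν = (∑ i ∈ s, b i) ^ n := by
  classical
  rw [Finset.sum_pow_eq_sum_piAntidiag]
  refine Finset.sum_nbij' (i := fun (ν : ι →₀ ℕ) => ⇑ν)
    (j := fun k => Finsupp.onFinset s (fun i => if i ∈ s then k i else 0)
      (fun a ha => by by_contra h; simp [h] at ha)) ?_ ?_ ?_ ?_ ?_
  · intro ν hν
    rw [Finset.mem_finsuppAntidiag] at hν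
    rw [Finset.mem_piAntidiag]
    exact ⟨hν.1, fun i hi => hν.2 (Finsupp.mem_support_iff.2 hi)⟩
  · intro k hk
    rw [Finset.mem_piAntidiag] at hk
    rw [Finset.mem_finsuppAntidiag]
    constructor
    · rw [← hk.1]
      refine Finset.sum_congr rfl fun i hi => ?_
      simp [Finsupp.onFinset_apply, hi]
    · exact Finsupp.support_onFinset_subset
  · intro ν hν
    rw [Finset.mem_finsuppAntidiag] at hν
    ext i
    by_cases hi : i ∈ s
    · simp [hi]
    · simp only [Finsupp.onFinset_apply, if_neg hi]
      exact (Finsupp.notMem_support_iff.1 fun hc => hi (hν.2 hc)).symm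
  · intro k hk
    rw [Finset.mem_piAntidiag] at hk
    funext i
    by_cases hi : i ∈ s
    · simp [hi]
    · simp only [Finsupp.onFinset_apply, if_neg hi]
      by_contra h
      exact hi (hk.2 i (Ne.symm h))
  · intro ν hν
    rw [Finset.mem_finsuppAntidiag] at hν
    rw [term_eq_over hν.2]


-- single term ≤ multinomial sum
lemma term_le [DecidableEq ι] {b : ι → ℝ} (hb : ∀ i, 0 ≤ b i) {s : Finset ι} {ν : ι →₀ ℕ}
    (h : ν.support ⊆ s) :
    term b ν ≤ (∑ i ∈ s, b i) ^ (ν.sum fun _ n => n) := by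
  rw [← sum_term b s]
  refine Finset.single_le_sum (f := term b) (fun μ _ => term_nonneg hb μ) ?_
  rw [Finset.mem_finsuppAntidiag]
  exact ⟨(Finsupp.sum_of_support_subset ν h (fun _ n => n) (fun _ _ => rfl)).symm, h⟩

-- (c^n)^σ = (c^σ)^n for c ≥ 0
lemma pow_rpow {c : ℝ} (hc : 0 ≤ c) (σ : ℝ) (n : ℕ) : (c ^ n) ^ σ = (c ^ σ) ^ n := by
  rw [← Real.rpow_natCast c n, ← Real.rpow_mul hc, mul_comm, Real.rpow_mul hc,
    Real.rpow_natCast]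

-- two-term subadditivity of rpow
lemma rpow_add_le {x y σ : ℝ} (hx : 0 ≤ x) (hy : 0 ≤ y) (hσ0 : 0 ≤ σ) (hσ1 : σ ≤ 1) :
    (x + y) ^ σ ≤ x ^ σ + y ^ σ := by
  have := NNReal.rpow_add_le_add_rpow (⟨x, hx⟩ : ℝ≥0) (⟨y, hy⟩ : ℝ≥0) hσ0 hσ1
  have h2 := NNReal.coe_le_coe.2 this
  push_cast [NNReal.coe_rpow] at h2
  exact h2

lemma rpow_sum_le {σ : ℝ} (hσ0 : 0 < σ) (hσ1 : σ ≤ 1) {s : Finset ι} {f : ι → ℝ}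
    (hf : ∀ i ∈ s, 0 ≤ f i) :
    (∑ i ∈ s, f i) ^ σ ≤ ∑ i ∈ s, f i ^ σ := by
  classical
  induction s using Finset.cons_induction with
  | empty => simp [Real.zero_rpow hσ0.ne']
  | cons a s ha ih =>
    rw [Finset.sum_cons, Finset.sum_cons]
    refine le_trans (rpow_add_le (hf a (Finset.mem_cons_self a s))
      (Finset.sum_nonneg fun i hi => hf i (Finset.mem_cons_of_mem hi)) hσ0.le hσ1) ?_
    exact add_le_add le_rfl (ih fun i hi => hf i (Finset.mem_cons_of_mem hi))

/-- Lemma 7.1 part: summability of the plain series when partial sums of `b` stay ≤ A < 1. -/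
lemma summable_term {b : ι → ℝ} (hb : ∀ i, 0 ≤ b i) {A : ℝ}
    (hA : ∀ E : Finset ι, ∑ i ∈ E, b i ≤ A) (hA1 : A < 1) :
    Summable (term b) := by
  classical
  have hA0 : 0 ≤ A := le_trans (by simp) (hA ∅)
  refine summable_of_sum_le (c := (1 - A)⁻¹) (fun ν => term_nonneg hb ν) ?_
  intro u
  set E : Finset ι := u.sup Finsupp.support with hE
  set P : ℕ := u.sup (fun ν => ν.sum fun _ n => n) with hP
  have hsubset : u ⊆ (Finset.range (P + 1)).biUnion (fun p => Finset.finsuppAntidiag E p) := by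
    intro ν hν
    rw [Finset.mem_biUnion]
    refine ⟨ν.sum fun _ n => n, Finset.mem_range.2 (Nat.lt_succ_of_le (Finset.le_sup (f := fun ν => ν.sum fun _ n => n) hν)), ?_⟩
    rw [Finset.mem_finsuppAntidiag]
    have hsupp : ν.support ⊆ E := Finset.le_sup hν
    exact ⟨(Finsupp.sum_of_support_subset ν hsupp (fun _ n => n) (fun _ _ => rfl)).symm, hsupp⟩
  have hdisj : (↑(Finset.range (P + 1)) : Set ℕ).PairwiseDisjoint
      (fun p => Finset.finsuppAntidiag E p) := by
    intro p _ q _ hpq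
    simp only [Finset.disjoint_left]
    intro ν h1 h2
    rw [Finset.mem_finsuppAntidiag] at h1 h2
    exact hpq (h1.1.symm.trans h2.1)
  calc ∑ ν ∈ u, term b ν
      ≤ ∑ ν ∈ (Finset.range (P + 1)).biUnion (fun p => Finset.finsuppAntidiag E p), term b ν :=
        Finset.sum_le_sum_of_subset_of_nonneg hsubset (fun ν _ _ => term_nonneg hb ν)
    _ = ∑ p ∈ Finset.range (P + 1), ∑ ν ∈ Finset.finsuppAntidiag E p, term b ν :=
        Finset.sum_biUnion hdisj
    _ = ∑ p ∈ Finset.range (P + 1), (∑ i ∈ E, b i) ^ p := by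
        simp_rw [sum_term]
    _ ≤ ∑ p ∈ Finset.range (P + 1), A ^ p := by
        refine Finset.sum_le_sum fun p _ => pow_le_pow_left₀
          (Finset.sum_nonneg fun i _ => hb i) (hA E) p
    _ ≤ (1 - A)⁻¹ := by
        have hs : Summable (fun p : ℕ => A ^ p) := summable_geometric_of_lt_one hA0 hA1
        calc ∑ p ∈ Finset.range (P + 1), A ^ p
            ≤ ∑' p : ℕ, A ^ p := Summable.sum_le_tsum _ (fun i _ => pow_nonneg hA0 i) hs
          _ = (1 - A)⁻¹ := tsum_geometric_of_lt_one hA0 hA1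


lemma apply_le_deg (ν : ι →₀ ℕ) (i : ι) : ν i ≤ ν.sum fun _ n => n := by
  classical
  by_cases hi : i ∈ ν.support
  · exact Finset.single_le_sum (f := fun j => ν j) (fun j _ => Nat.zero_le _) hi
  · simp [Finsupp.notMem_support_iff.1 hi]

lemma poly_geom_summable (k : ℕ) {r : ℝ} (hr0 : 0 ≤ r) (hr1 : r < 1) :
    Summable (fun p : ℕ => ((p : ℝ) + 1) ^ k * r ^ p) := by
  have h1 : Summable (fun p : ℕ => (2:ℝ)^k * ((p:ℝ)^k * r^p) + (2:ℝ)^k * r^p) := by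
    refine Summable.add (Summable.mul_left _ ?_) (Summable.mul_left _ ?_)
    · exact summable_pow_mul_geometric_of_norm_lt_one k (by rwa [Real.norm_eq_abs, abs_of_nonneg hr0])
    · exact summable_geometric_of_lt_one hr0 hr1
  refine h1.of_nonneg_of_le (fun p => by positivity) (fun p => ?_)
  have hp0 : (0:ℝ) ≤ (p:ℝ) := Nat.cast_nonneg p
  have hb : ((p:ℝ) + 1) ^ k ≤ (2:ℝ)^k * ((p:ℝ)^k + 1) := by
    have h2 : (p:ℝ) + 1 ≤ 2 * max (p:ℝ) 1 := by
      rcases le_total (p:ℝ) 1 with h | h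
      · rw [max_eq_right h]; linarith
      · rw [max_eq_left h]; linarith
    calc ((p:ℝ) + 1) ^ k ≤ (2 * max (p:ℝ) 1) ^ k :=
          pow_le_pow_left₀ (by positivity) h2 k
      _ = 2^k * (max (p:ℝ) 1)^k := mul_pow 2 _ k
      _ ≤ 2^k * ((p:ℝ)^k + 1) := by
          refine mul_le_mul_of_nonneg_left ?_ (by positivity)
          rcases le_total (p:ℝ) 1 with h | h
          · rw [max_eq_right h, one_pow]; nlinarith [pow_nonneg hp0 k]
          · rw [max_eq_left h]; nlinarith [pow_nonneg hp0 k]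
  calc ((p:ℝ) + 1) ^ k * r ^ p ≤ (2:ℝ)^k * ((p:ℝ)^k + 1) * r ^ p :=
        mul_le_mul_of_nonneg_right hb (pow_nonneg hr0 p)
    _ = (2:ℝ)^k * ((p:ℝ)^k * r^p) + (2:ℝ)^k * r^p := by ring

/-- ℓ^σ summability for finitely many variables. -/
lemma summable_term_rpow_fin [Fintype ι] [DecidableEq ι] {b : ι → ℝ} (hb : ∀ i, 0 ≤ b i)
    (hsum : ∑ i, b i < 1) {σ : ℝ} (hσ0 : 0 < σ) (hσ1 : σ ≤ 1) :
    Summable fun ν : ι →₀ ℕ => term b ν ^ σ := by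
  classical
  set A : ℝ := ∑ i, b i with hA
  have hA0 : 0 ≤ A := Finset.sum_nonneg fun i _ => hb i
  set r : ℝ := A ^ σ with hrdef
  have hr0 : 0 ≤ r := Real.rpow_nonneg hA0 σ
  have hr1 : r < 1 := Real.rpow_lt_one hA0 hsum hσ0
  set k : ℕ := Fintype.card ι with hk
  have hmaj := poly_geom_summable k hr0 hr1
  refine summable_of_sum_le (c := ∑' p : ℕ, ((p : ℝ) + 1) ^ k * r ^ p)
    (fun ν => Real.rpow_nonneg (term_nonneg hb ν) σ) ?_
  intro u
  set P : ℕ := u.sup (fun ν => ν.sum fun _ n => n) with hP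
  have hmap : ∀ ν ∈ u, (ν.sum fun _ n => n) ∈ Finset.range (P + 1) := fun ν hν =>
    Finset.mem_range.2 (Nat.lt_succ_of_le (Finset.le_sup (f := fun ν => ν.sum fun _ n => n) hν))
  rw [← Finset.sum_fiberwise_of_maps_to hmap (fun ν => term b ν ^ σ)]
  have hinner : ∀ p ∈ Finset.range (P + 1),
      (∑ ν ∈ u.filter (fun ν => (ν.sum fun _ n => n) = p), term b ν ^ σ)
        ≤ ((p : ℝ) + 1) ^ k * r ^ p := by
    intro p _
    set v := u.filter (fun ν => (ν.sum fun _ n => n) = p) with hv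
    have hterm : ∀ ν ∈ v, term b ν ^ σ ≤ r ^ p := by
      intro ν hν
      rw [Finset.mem_filter] at hν
      have h1 : term b ν ≤ A ^ p := by
        have := term_le hb (s := Finset.univ) (ν := ν) (Finset.subset_univ _)
        rwa [hν.2] at this
      calc term b ν ^ σ ≤ (A ^ p) ^ σ :=
            Real.rpow_le_rpow (term_nonneg hb ν) h1 hσ0.le
        _ = r ^ p := pow_rpow hA0 σ p
    have hcard : (v.card : ℝ) ≤ ((p : ℝ) + 1) ^ k := by
      have hinj : Set.InjOn (fun (ν : ι →₀ ℕ) (i : ι) => (⟨min (ν i) p,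
          lt_of_le_of_lt (min_le_right _ _) (Nat.lt_succ_self p)⟩ : Fin (p + 1))) ↑v := by
        intro ν hν ν' hν' hEq
        rw [hv, Finset.coe_filter] at hν hν'
        have hle : ∀ i, ν i ≤ p := fun i => hν.2 ▸ apply_le_deg ν i
        have hle' : ∀ i, ν' i ≤ p := fun i => hν'.2 ▸ apply_le_deg ν' i
        ext i
        have := congrFun hEq i
        simpa [min_eq_left (hle i), min_eq_left (hle' i)] using congrArg Fin.val this
      have := Finset.card_le_card_of_injOn _ (fun ν _ => Finset.mem_univ _) hinj
      rw [Finset.card_univ, Fintype.card_fun, Fintype.card_fin] at this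
      calc (v.card : ℝ) ≤ (((p+1) ^ k : ℕ) : ℝ) := Nat.cast_le.2 this
        _ = ((p : ℝ) + 1) ^ k := by push_cast; ring
    calc (∑ ν ∈ v, term b ν ^ σ) ≤ v.card • (r ^ p) := Finset.sum_le_card_nsmul v _ _ hterm
      _ = (v.card : ℝ) * r ^ p := nsmul_eq_mul _ _
      _ ≤ ((p : ℝ) + 1) ^ k * r ^ p :=
          mul_le_mul_of_nonneg_right hcard (pow_nonneg hr0 p)
  calc ∑ p ∈ Finset.range (P + 1), ∑ ν ∈ u.filter (fun ν => (ν.sum fun _ n => n) = p),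
        term b ν ^ σ
      ≤ ∑ p ∈ Finset.range (P + 1), ((p : ℝ) + 1) ^ k * r ^ p := Finset.sum_le_sum hinner
    _ ≤ ∑' p : ℕ, ((p : ℝ) + 1) ^ k * r ^ p :=
        Summable.sum_le_tsum _ (fun p _ => by positivity) hmaj


lemma prod_sumElim {α β M N : Type*} [Zero M] [CommMonoid N] (μ : α →₀ M) (τ : β →₀ M)
    (g : α ⊕ β → M → N) (h : ∀ x, g x 0 = 1) :
    (Finsupp.sumElim μ τ).prod g
      = μ.prod (fun a m => g (Sum.inl a) m) * τ.prod (fun c m => g (Sum.inr c) m) := by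
  classical
  have hsub : (Finsupp.sumElim μ τ).support ⊆
      μ.support.map ⟨Sum.inl, Sum.inl_injective⟩ ∪ τ.support.map ⟨Sum.inr, Sum.inr_injective⟩ := by
    intro x hx
    have hx' := Finsupp.mem_support_iff.1 hx
    rcases x with a | c
    · exact Finset.mem_union_left _ (Finset.mem_map_of_mem _ (Finsupp.mem_support_iff.2 (by simpa using hx')))
    · exact Finset.mem_union_right _ (Finset.mem_map_of_mem _ (Finsupp.mem_support_iff.2 (by simpa using hx')))
  rw [Finsupp.prod_of_support_subset _ hsub g (fun x _ => h x), Finset.prod_union, Finset.prod_map,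
    Finset.prod_map]
  · rfl
  · rw [Finset.disjoint_left]
    rintro x hx1 hx2
    rw [Finset.mem_map] at hx1 hx2
    obtain ⟨a, _, rfl⟩ := hx1
    obtain ⟨c, _, hc⟩ := hx2
    simp at hc
lemma sum_sumElim {α β M N : Type*} [Zero M] [AddCommMonoid N] (μ : α →₀ M) (τ : β →₀ M)
    (g : α ⊕ β → M → N) (h : ∀ x, g x 0 = 0) :
    (Finsupp.sumElim μ τ).sum g
      = μ.sum (fun a m => g (Sum.inl a) m) + τ.sum (fun c m => g (Sum.inr c) m) := by
  classical
  have hsub : (Finsupp.sumElim μ τ).support ⊆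
      μ.support.map ⟨Sum.inl, Sum.inl_injective⟩ ∪ τ.support.map ⟨Sum.inr, Sum.inr_injective⟩ := by
    intro x hx
    have hx' := Finsupp.mem_support_iff.1 hx
    rcases x with a | c
    · exact Finset.mem_union_left _ (Finset.mem_map_of_mem _ (Finsupp.mem_support_iff.2 (by simpa using hx')))
    · exact Finset.mem_union_right _ (Finset.mem_map_of_mem _ (Finsupp.mem_support_iff.2 (by simpa using hx')))
  rw [Finsupp.sum_of_support_subset _ hsub g (fun x _ => h x), Finset.sum_union, Finset.sum_map,
    Finset.sum_map]
  · rfl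
  · rw [Finset.disjoint_left]
    rintro x hx1 hx2
    rw [Finset.mem_map] at hx1 hx2
    obtain ⟨a, _, rfl⟩ := hx1
    obtain ⟨c, _, hc⟩ := hx2
    simp at hc

lemma fac_prod_pos (ν : ι →₀ ℕ) : 0 < ν.prod fun _ n => (n.factorial : ℝ) :=
  Finset.prod_pos fun i _ => Nat.cast_pos.2 (Nat.factorial_pos (ν i))

lemma term_sumElim {α β : Type*} (c : α ⊕ β → ℝ) (μ : α →₀ ℕ) (τ : β →₀ ℕ) :
    term c (Finsupp.sumElim μ τ)
      = (((μ.sum fun _ n => n) + (τ.sum fun _ n => n)).choose (μ.sum fun _ n => n) : ℝ)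
        * term (c ∘ Sum.inl) μ * term (c ∘ Sum.inr) τ := by
  set p := μ.sum fun _ n => n with hp
  set q := τ.sum fun _ n => n with hq
  have hdeg : ((Finsupp.sumElim μ τ).sum fun _ n => n) = p + q :=
    sum_sumElim μ τ (fun _ n => n) (fun _ => rfl)
  have hfac : ((Finsupp.sumElim μ τ).prod fun _ n => (n.factorial : ℝ))
      = (μ.prod fun _ n => (n.factorial : ℝ)) * (τ.prod fun _ n => (n.factorial : ℝ)) :=
    prod_sumElim μ τ (fun _ n => (n.factorial : ℝ)) (fun _ => by simp)
  have hpow : ((Finsupp.sumElim μ τ).prod fun j n => c j ^ n)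
      = (μ.prod fun a n => c (Sum.inl a) ^ n) * (τ.prod fun a n => c (Sum.inr a) ^ n) :=
    prod_sumElim μ τ (fun j n => c j ^ n) (fun _ => by simp)
  have hchoose : (((p + q).factorial : ℕ) : ℝ)
      = ((p + q).choose p : ℝ) * (p.factorial : ℝ) * (q.factorial : ℝ) := by
    have h := Nat.add_choose_mul_factorial_mul_factorial p q
    have h2 : (p + q).choose q = (p + q).choose p :=
      (Nat.choose_symm_add (a := p) (b := q)).symm
    exact_mod_cast (by rw [← h, h2] : ((p+q).factorial) = (p + q).choose p * p.factorial * q.factorial)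
  unfold term W
  rw [hdeg, hfac, hpow, hchoose]
  have h1 : (μ.prod fun _ n => (n.factorial : ℝ)) ≠ 0 := (fac_prod_pos μ).ne'
  have h2 : (τ.prod fun _ n => (n.factorial : ℝ)) ≠ 0 := (fac_prod_pos τ).ne'
  field_simp
  rw [← hp, ← hq]
  simp only [Function.comp_apply]
  ring

theorem sum_equivMapDomain {α β M N : Type*} [Zero M] [AddCommMonoid N]
    (f : α ≃ β) (l : α →₀ M) (g : β → M → N) :
    (Finsupp.equivMapDomain f l).sum g = l.sum fun a m => g (f a) m := by
  simp [Finsupp.sum, Finsupp.equivMapDomain]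

lemma term_equivMapDomain {α β : Type*} (e : α ≃ β) (b : β → ℝ) (l : α →₀ ℕ) :
    term b (Finsupp.equivMapDomain e l) = term (b ∘ e) l := by
  unfold term W
  rw [Finsupp.prod_equivMapDomain, Finsupp.prod_equivMapDomain, sum_equivMapDomain]
  rfl

-- scaling lemma
lemma term_div (c : ι → ℝ) {t : ℝ} (ht : t ≠ 0) (ν : ι →₀ ℕ) :
    term (fun i => c i / t) ν = term c ν / t ^ (ν.sum fun _ n => n) := by
  unfold term
  rw [mul_div_assoc]
  congr 1
  unfold Finsupp.prod
  calc ∏ a ∈ ν.support, (c a / t) ^ ν a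
      = (∏ a ∈ ν.support, c a ^ ν a) / ∏ a ∈ ν.support, t ^ ν a := by
        rw [← Finset.prod_div_distrib]
        exact Finset.prod_congr rfl fun a _ => div_pow _ _ _
    _ = (∏ a ∈ ν.support, c a ^ ν a) / t ^ (ν.sum fun _ n => n) := by
        rw [Finset.prod_pow_eq_pow_sum]
        rfl

-- binomial bound
lemma choose_bound {θ : ℝ} (hθ0 : 0 < θ) (hθ1 : θ < 1) (p q : ℕ) :
    ((p + q).choose p : ℝ) * θ ^ p * (1 - θ) ^ q ≤ 1 := by
  have h := add_pow θ (1 - θ) (p + q)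
  rw [add_sub_cancel, one_pow] at h
  have hmem : p ∈ Finset.range (p + q + 1) := Finset.mem_range.2 (by omega)
  have hle := Finset.single_le_sum (f := fun i => θ ^ i * (1 - θ) ^ (p + q - i) * ((p + q).choose i : ℝ))
    (fun i _ => mul_nonneg (mul_nonneg (pow_nonneg hθ0.le _)
      (pow_nonneg (by linarith) _)) (Nat.cast_nonneg _)) hmem
  rw [← h] at hle
  calc ((p + q).choose p : ℝ) * θ ^ p * (1 - θ) ^ q
      = θ ^ p * (1 - θ) ^ (p + q - p) * ((p + q).choose p : ℝ) := by
        rw [Nat.add_sub_cancel_left]; ring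
    _ ≤ 1 := hle


/-- the rpow of a term, bounded by a term of rpow'ed weights. -/
lemma term_rpow_le {b : ι → ℝ} (hb : ∀ i, 0 ≤ b i) {σ : ℝ} (hσ0 : 0 < σ) (hσ1 : σ ≤ 1)
    (ν : ι →₀ ℕ) :
    term b ν ^ σ ≤ term (fun i => b i ^ σ) ν := by
  unfold term
  have hP : (0:ℝ) ≤ ν.prod fun j n => b j ^ n :=
    Finset.prod_nonneg fun i _ => pow_nonneg (hb i) _
  rw [Real.mul_rpow (W_nonneg ν) hP]
  have h1 : W ν ^ σ ≤ W ν := by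
    calc W ν ^ σ ≤ W ν ^ (1:ℝ) :=
          Real.rpow_le_rpow_of_exponent_le (one_le_W ν) hσ1
      _ = W ν := Real.rpow_one _
  have h2 : (ν.prod fun j n => b j ^ n) ^ σ = ν.prod fun j n => (b j ^ σ) ^ n := by
    unfold Finsupp.prod
    rw [← Real.finset_prod_rpow _ _ (fun i _ => pow_nonneg (hb i) _)]
    exact Finset.prod_congr rfl fun i _ => pow_rpow (hb i) σ (ν i)
  rw [h2]
  exact mul_le_mul_of_nonneg_right h1
    (Finset.prod_nonneg fun i _ => pow_nonneg (Real.rpow_nonneg (hb i) σ) _)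

/-- The sufficiency direction. -/
lemma sufficiency {σ : ℝ} (hσ0 : 0 < σ) (hσ1 : σ < 1) {b : ℕ → ℝ} (hb : ∀ m, 0 ≤ b m)
    (hsb : Summable b) (hB : ∑' m, b m < 1) (hbσ : Summable fun m => b m ^ σ) :
    Summable fun ν : ℕ →₀ ℕ => term b ν ^ σ := by
  classical
  set B : ℝ := ∑' m, b m with hBdef
  have hB0 : 0 ≤ B := tsum_nonneg hb
  set θ : ℝ := (B + 1) / 2 with hθdef
  have hθB : B < θ := by rw [hθdef]; linarith
  have hθ1 : θ < 1 := by rw [hθdef]; linarith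
  have hθ0 : 0 < θ := by rw [hθdef]; linarith
  have h1θ : 0 < 1 - θ := by linarith
  have hεpos : 0 < (1 - θ) ^ σ := Real.rpow_pos_of_pos h1θ σ
  -- choose J with small tail
  have htail : Tendsto (fun i => ∑' k : ℕ, b (k + i) ^ σ) atTop (nhds 0) :=
    tendsto_sum_nat_add (fun m => b m ^ σ)
  obtain ⟨J, hJ⟩ := (htail.eventually_lt_const hεpos).exists
  -- the equivalence (Fin J ⊕ ℕ) ≃ ℕ
  set e : Fin J ⊕ ℕ ≃ ℕ :=
    { toFun := Sum.elim Fin.val (fun k => J + k)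
      invFun := fun n => if h : n < J then Sum.inl ⟨n, h⟩ else Sum.inr (n - J)
      left_inv := by
        rintro (⟨i, hi⟩ | k)
        · simp [hi]
        · simp only [Sum.elim_inr]
          simp
      right_inv := by
        intro n
        by_cases h : n < J
        · simp [h]
        · simp only [dif_neg h, Sum.elim_inr]
          omega } with hedef
  set Ψ : ((Fin J →₀ ℕ) × (ℕ →₀ ℕ)) ≃ (ℕ →₀ ℕ) :=
    Finsupp.sumFinsuppEquivProdFinsupp.symm.trans (Finsupp.equivCongrLeft e) with hΨdef
  rw [← Ψ.summable_iff]
  -- the two comparison series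
  set c1 : Fin J → ℝ := fun i => b i / θ with hc1
  set c2 : ℕ → ℝ := fun k => (b (J + k) / (1 - θ)) ^ σ with hc2
  have hc1nn : ∀ i, 0 ≤ c1 i := fun i => div_nonneg (hb i) hθ0.le
  have hc2nn : ∀ k, 0 ≤ c2 k := fun k => Real.rpow_nonneg (div_nonneg (hb _) h1θ.le) σ
  have hg : Summable fun μ : Fin J →₀ ℕ => term c1 μ ^ σ := by
    refine summable_term_rpow_fin hc1nn ?_ hσ0 hσ1.le
    have hsum : ∑ i : Fin J, b i ≤ B := by
      rw [Fin.sum_univ_eq_sum_range]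
      exact Summable.sum_le_tsum _ (fun i _ => hb i) hsb
    simp only [hc1]
    rw [← Finset.sum_div, div_lt_one hθ0]
    exact lt_of_le_of_lt hsum hθB
  have hh : Summable (term c2) := by
    have hs2 : Summable fun k => b (J + k) ^ σ := by
      have := hbσ.comp_injective (add_right_injective J)
      exact this
    refine summable_term hc2nn (A := (∑' k : ℕ, b (k + J) ^ σ) / (1 - θ) ^ σ) ?_ ?_
    · intro E
      have h1 : ∀ k, c2 k = b (J + k) ^ σ / (1 - θ) ^ σ := fun k =>
        Real.div_rpow (hb _) h1θ.le σ
      have hnum : ∑ k ∈ E, b (J + k) ^ σ ≤ ∑' k : ℕ, b (k + J) ^ σ := by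
        rw [tsum_congr (fun k => by rw [add_comm k J])]
        exact Summable.sum_le_tsum E (fun k _ => Real.rpow_nonneg (hb _) σ) hs2
      calc ∑ k ∈ E, c2 k = ∑ k ∈ E, b (J + k) ^ σ / (1 - θ) ^ σ :=
            Finset.sum_congr rfl fun k _ => h1 k
        _ = (∑ k ∈ E, b (J + k) ^ σ) / (1 - θ) ^ σ := by rw [Finset.sum_div]
        _ ≤ (∑' k : ℕ, b (k + J) ^ σ) / (1 - θ) ^ σ := by gcongr
    · rw [div_lt_one hεpos]
      exact hJ
  have hprod : Summable fun x : (Fin J →₀ ℕ) × (ℕ →₀ ℕ) =>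
      (term c1 x.1 ^ σ) * term c2 x.2 :=
    hg.mul_of_nonneg hh (fun μ => Real.rpow_nonneg (term_nonneg hc1nn μ) σ)
      (fun τ => term_nonneg hc2nn τ)
  refine hprod.of_nonneg_of_le
    (fun x => Real.rpow_nonneg (term_nonneg hb _) σ) (fun x => ?_)
  obtain ⟨μ, τ⟩ := x
  show term b (Ψ (μ, τ)) ^ σ ≤ term c1 μ ^ σ * term c2 τ
  have hΨeq : term b (Ψ (μ, τ)) = term (b ∘ e) (Finsupp.sumElim μ τ) := by
    have h0 : Ψ (μ, τ) = Finsupp.equivMapDomain e (Finsupp.sumElim μ τ) := rfl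
    rw [h0, term_equivMapDomain]
  rw [hΨeq]
  set p : ℕ := μ.sum fun _ n => n with hp
  set q : ℕ := τ.sum fun _ n => n with hq
  have hbe1 : ((b ∘ e) ∘ Sum.inl : Fin J → ℝ) = fun i : Fin J => b i := rfl
  have hbe2 : ((b ∘ e) ∘ Sum.inr : ℕ → ℝ) = fun k => b (J + k) := rfl
  have key : term (b ∘ e) (Finsupp.sumElim μ τ)
      ≤ term c1 μ * term (fun k => b (J + k) / (1 - θ)) τ := by
    rw [term_sumElim, hbe1, hbe2]
    have hd1 : term c1 μ = term (fun i : Fin J => b i) μ / θ ^ p :=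
      term_div _ hθ0.ne' μ
    have hd2 : term (fun k => b (J + k) / (1 - θ)) τ
        = term (fun k => b (J + k)) τ / (1 - θ) ^ q :=
      term_div _ h1θ.ne' τ
    rw [hd1, hd2]
    have hT1 : 0 ≤ term (fun i : Fin J => b i) μ :=
      term_nonneg (b := fun i : Fin J => b i) (fun i => hb i) μ
    have hT2 : 0 ≤ term (fun k => b (J + k)) τ := term_nonneg (fun k => hb _) τ
    have hcb := choose_bound hθ0 hθ1 p q
    have hθp : (0:ℝ) < θ ^ p := pow_pos hθ0 p
    have hθq : (0:ℝ) < (1 - θ) ^ q := pow_pos h1θ q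
    have hchoose : ((p + q).choose p : ℝ) ≤ (θ ^ p)⁻¹ * ((1 - θ) ^ q)⁻¹ := by
      rw [← mul_inv, ← one_div, le_div_iff₀ (by positivity)]
      calc ((p + q).choose p : ℝ) * (θ ^ p * (1 - θ) ^ q)
          = ((p + q).choose p : ℝ) * θ ^ p * (1 - θ) ^ q := by ring
        _ ≤ 1 := hcb
    calc ((p + q).choose p : ℝ) * term (fun i : Fin J => b i) μ * term (fun k => b (J + k)) τ
        ≤ ((θ ^ p)⁻¹ * ((1 - θ) ^ q)⁻¹) * term (fun i : Fin J => b i) μ *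
            term (fun k => b (J + k)) τ := by
          apply mul_le_mul_of_nonneg_right (mul_le_mul_of_nonneg_right hchoose hT1) hT2
      _ = term (fun i : Fin J => b i) μ / θ ^ p * (term (fun k => b (J + k)) τ / (1 - θ) ^ q) := by
          field_simp
  calc term (b ∘ e) (Finsupp.sumElim μ τ) ^ σ
      ≤ (term c1 μ * term (fun k => b (J + k) / (1 - θ)) τ) ^ σ :=
        Real.rpow_le_rpow (term_nonneg (fun x => by
          rcases x with i | k
          · exact hb _
          · exact hb _) _) key hσ0.le
    _ = term c1 μ ^ σ * term (fun k => b (J + k) / (1 - θ)) τ ^ σ :=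
        Real.mul_rpow (term_nonneg hc1nn μ)
          (term_nonneg (fun k => div_nonneg (hb _) h1θ.le) τ)
    _ ≤ term c1 μ ^ σ * term c2 τ := by
        refine mul_le_mul_of_nonneg_left ?_ (Real.rpow_nonneg (term_nonneg hc1nn μ) σ)
        exact term_rpow_le (fun k => div_nonneg (hb _) h1θ.le) hσ0 hσ1.le τ


lemma term_single (b : ι → ℝ) (m : ι) : term b (Finsupp.single m 1) = b m := by
  unfold term W
  rw [Finsupp.sum_single_index rfl, Finsupp.prod_single_index (by simp),
    Finsupp.prod_single_index (by simp)]
  simp [Nat.factorial]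

lemma term_zero (b : ι → ℝ) : term b 0 = 1 := by
  unfold term W
  rw [Finsupp.sum_zero_index, Finsupp.prod_zero_index, Finsupp.prod_zero_index]
  simp

/-- The necessity direction. -/
lemma necessity {σ : ℝ} (hσ0 : 0 < σ) (hσ1 : σ < 1) {b : ℕ → ℝ} (hb : ∀ m, 0 ≤ b m)
    (S : Summable fun ν : ℕ →₀ ℕ => term b ν ^ σ) :
    (∑' m, b m) < 1 ∧ Summable fun m => b m ^ σ := by
  classical
  have hnn : ∀ ν : ℕ →₀ ℕ, 0 ≤ term b ν ^ σ := fun ν =>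
    Real.rpow_nonneg (term_nonneg hb ν) σ
  -- (i) ℓ^σ summability of b
  have hbσ : Summable fun m => b m ^ σ := by
    have h1 : Summable ((fun ν : ℕ →₀ ℕ => term b ν ^ σ) ∘ (fun m => Finsupp.single m 1)) :=
      S.comp_injective (Finsupp.single_left_injective one_ne_zero)
    refine h1.congr fun m => ?_
    simp only [Function.comp_apply, term_single]
  -- the total sum
  set T : ℝ := ∑' ν : ℕ →₀ ℕ, term b ν ^ σ with hT
  have hT1 : 1 ≤ T := by
    have := Summable.le_tsum S 0 (fun ν _ => hnn ν)
    rwa [term_zero, Real.one_rpow] at this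
  have hT0 : 0 < T := lt_of_lt_of_le one_pos hT1
  set ρ : ℝ := 1 - T⁻¹ with hρ
  have hρ0 : 0 ≤ ρ := by
    have h2 : T⁻¹ ≤ 1 := inv_le_one_of_one_le₀ hT1
    rw [hρ]; linarith
  have hρ1 : ρ < 1 := by
    have h2 : 0 < T⁻¹ := inv_pos.2 hT0
    rw [hρ]; linarith
  -- uniform bound on finite sums
  have hE : ∀ E : Finset ℕ, (∑ i ∈ E, b i) ^ σ ≤ ρ := by
    intro E
    set s : ℝ := ∑ i ∈ E, b i with hs
    have hs0 : 0 ≤ s := Finset.sum_nonneg fun i _ => hb i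
    set r : ℝ := s ^ σ with hr
    have hr0 : 0 ≤ r := Real.rpow_nonneg hs0 σ
    -- partial geometric sums are bounded by T
    have hstep : ∀ N : ℕ, ∑ n ∈ Finset.range N, r ^ n ≤ T := by
      intro N
      have hterm : ∀ n, r ^ n ≤ ∑ ν ∈ Finset.finsuppAntidiag E n, term b ν ^ σ := by
        intro n
        have h1 : (s ^ n) ^ σ ≤ ∑ ν ∈ Finset.finsuppAntidiag E n, term b ν ^ σ := by
          rw [← sum_term b E n]
          exact rpow_sum_le hσ0 hσ1.le fun ν _ => term_nonneg hb ν
        rwa [pow_rpow hs0 σ n] at h1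
      have hdisj : (↑(Finset.range N) : Set ℕ).PairwiseDisjoint
          (fun n => Finset.finsuppAntidiag E n) := by
        intro p _ q _ hpq
        simp only [Finset.disjoint_left]
        intro ν h1 h2
        rw [Finset.mem_finsuppAntidiag] at h1 h2
        exact hpq (h1.1.symm.trans h2.1)
      calc ∑ n ∈ Finset.range N, r ^ n
          ≤ ∑ n ∈ Finset.range N, ∑ ν ∈ Finset.finsuppAntidiag E n, term b ν ^ σ :=
            Finset.sum_le_sum fun n _ => hterm n
        _ = ∑ ν ∈ (Finset.range N).biUnion (fun n => Finset.finsuppAntidiag E n),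
              term b ν ^ σ := (Finset.sum_biUnion hdisj).symm
        _ ≤ T := Summable.sum_le_tsum _ (fun ν _ => hnn ν) S
    -- r < 1
    have hrlt : r < 1 := by
      by_contra hge
      push_neg at hge
      obtain ⟨N, hN⟩ := exists_nat_gt T
      have : (N : ℝ) ≤ ∑ n ∈ Finset.range N, r ^ n := by
        calc (N : ℝ) = ∑ _n ∈ Finset.range N, (1:ℝ) := by simp
          _ ≤ ∑ n ∈ Finset.range N, r ^ n :=
            Finset.sum_le_sum fun n _ => one_le_pow₀ hge
      linarith [hstep N]
    -- geometric limit
    have hgeom : (1 - r)⁻¹ ≤ T := by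
      have hsum : Summable fun n : ℕ => r ^ n := summable_geometric_of_lt_one hr0 hrlt
      rw [← tsum_geometric_of_lt_one hr0 hrlt]
      refine Summable.tsum_le_of_sum_le hsum fun u => ?_
      calc ∑ n ∈ u, r ^ n ≤ ∑ n ∈ Finset.range (u.sup id + 1), r ^ n := by
            refine Finset.sum_le_sum_of_subset_of_nonneg ?_ (fun n _ _ => pow_nonneg hr0 n)
            intro n hn
            exact Finset.mem_range.2 (Nat.lt_succ_of_le (Finset.le_sup (f := id) hn))
        _ ≤ T := hstep _
    -- conclude r ≤ ρ
    have hinv : T⁻¹ ≤ 1 - r := by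
      have h1r : 0 < 1 - r := by linarith
      have := inv_anti₀ (inv_pos.2 h1r) hgeom
      rwa [inv_inv] at this
    show r ≤ ρ
    rw [hρ]
    linarith
  -- from the rpow bound to a bound on sums
  set β : ℝ := ρ ^ σ⁻¹ with hβ
  have hβ1 : β < 1 := Real.rpow_lt_one hρ0 hρ1 (inv_pos.2 hσ0)
  have hsle : ∀ E : Finset ℕ, ∑ i ∈ E, b i ≤ β := by
    intro E
    have hs0 : 0 ≤ ∑ i ∈ E, b i := Finset.sum_nonneg fun i _ => hb i
    have := Real.rpow_le_rpow (Real.rpow_nonneg hs0 σ) (hE E) (inv_pos.2 hσ0).le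
    rwa [Real.rpow_rpow_inv hs0 hσ0.ne'] at this
  have hsb : Summable b := summable_of_sum_le hb hsle
  refine ⟨lt_of_le_of_lt (Summable.tsum_le_of_sum_le hsb hsle) hβ1, hbσ⟩


end CDS

/-- **Cohen–DeVore–Schwab summability criterion** (Theorem 7.2 of [CDS1]). For
`0 < σ < 1` and a nonnegative sequence `b`, the multiindexed sequence
`(|ν|!/ν!) b^ν` belongs to `ℓ^σ(𝓕)` iff `∑ₘ bₘ < 1` and `(bₘ) ∈ ℓ^σ(ℕ)`. -/
theorem cds_summability (σ : ℝ) (hσ0 : 0 < σ) (hσ1 : σ < 1)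
    (b : ℕ → ℝ) (hb : ∀ m, 0 ≤ b m) :
    (Summable fun ν : ℕ →₀ ℕ =>
        (((ν.sum fun _ n => n).factorial : ℝ) / (ν.prod fun _ n => (n.factorial : ℝ)) *
            ν.prod fun j n => b j ^ n) ^ σ) ↔
      ((∑' m, b m) < 1 ∧ Summable fun m => b m ^ σ) := by
  have hfun : (fun ν : ℕ →₀ ℕ =>
      (((ν.sum fun _ n => n).factorial : ℝ) / (ν.prod fun _ n => (n.factorial : ℝ)) *
        ν.prod fun j n => b j ^ n) ^ σ) = fun ν : ℕ →₀ ℕ => CDS.term b ν ^ σ := rfl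
  rw [hfun]
  constructor
  · exact fun S => CDS.necessity hσ0 hσ1 hb S
  · rintro ⟨h1, h2⟩
    have hsb : Summable b := by
      have h0 : Filter.Tendsto (fun m => b m ^ σ) Filter.atTop (nhds 0) :=
        h2.tendsto_atTop_zero
      have hev : ∀ᶠ m in Filter.atTop, b m ^ σ < 1 := h0.eventually_lt_const one_pos
      obtain ⟨N, hN⟩ := Filter.eventually_atTop.1 hev
      have hle : ∀ m, N ≤ m → b m ≤ b m ^ σ := by
        intro m hm
        have hblt : b m < 1 := by
          by_contra hge
          push_neg at hge
          exact absurd (Real.one_le_rpow hge hσ0.le) (not_le.2 (hN m hm))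
        rcases eq_or_lt_of_le (hb m) with h | h
        · rw [← h]
          exact Real.rpow_nonneg le_rfl σ
        · have := Real.rpow_le_rpow_of_exponent_ge h hblt.le hσ1.le
          rwa [Real.rpow_one] at this
      have hs1 : Summable fun m => b (m + N) ^ σ :=
        h2.comp_injective (add_left_injective N)
      have hs2 : Summable fun m => b (m + N) :=
        hs1.of_nonneg_of_le (fun m => hb _) (fun m => hle _ (Nat.le_add_left N m))
      exact (summable_nat_add_iff N).1 hs2
    exact CDS.sufficiency hσ0 hσ1 hb hsb h1 h2
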